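/- Let G be a finite simple graph admitting a trapezoid representation. Then G is bipartite (2-colorable) if and only if G contains no triangle, i.e., G is 3-clique-free. -/

import Mathlib

open Finset

/-- Width-2 Dilworth: a finite set with a transitive relation `r` admitting a strictly
monotone real rank, in which every 3 distinct elements contain a comparable pair,
can be partitioned into two chains. -/
lemma width2_chain_decomp {V : Type*} [DecidableEq V] (r : V → V → Prop) (t : V → ℝ)
    (htrans : ∀ {x y z}, r x y → r y z → r x z) (ht : ∀ x y, r x y → t x < t y)
    (s : Finset V)
    (hw : ∀ x ∈ s, ∀ y ∈ s, ∀ z ∈ s, x ≠ y → x ≠ z → y ≠ z →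
      r x y ∨ r y x ∨ r x z ∨ r z x ∨ r y z ∨ r z y) :
    ∃ f : V → Bool, ∀ x ∈ s, ∀ y ∈ s, x ≠ y → f x = f y → r x y ∨ r y x := by
  classical
  induction s using Finset.strongInduction with
  | _ s ih =>
    rcases s.eq_empty_or_nonempty with rfl | hne
    · exact ⟨fun _ => true, by simp⟩
    obtain ⟨m, hm, hmax⟩ := s.exists_max_image t hne
    set s' := s.erase m with hs'
    have hsub : s' ⊂ s := Finset.erase_ssubset hm
    obtain ⟨f, hf⟩ := ih s' hsub (fun x hx y hy z hz => hw x (Finset.mem_of_mem_erase hx)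
      y (Finset.mem_of_mem_erase hy) z (Finset.mem_of_mem_erase hz))
    -- no element of s is above m
    have hnrm : ∀ x ∈ s, ¬ r m x := fun x hx hr => absurd (ht _ _ hr) (not_lt.2 (hmax x hx))
    -- the elements of each color class incomparable to m
    set U : Bool → Finset V := fun c => s'.filter (fun x => f x = c ∧ ¬ r x m) with hU
    have hUmem : ∀ c, ∀ x ∈ U c, x ∈ s' ∧ f x = c ∧ ¬ r x m := by
      intro c x hx; simpa [hU] using Finset.mem_filter.mp hx
    have hUmem' : ∀ c x, x ∈ s' → f x = c → ¬ r x m → x ∈ U c := by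
      intro c x h1 h2 h3; exact Finset.mem_filter.mpr ⟨h1, h2, h3⟩
    -- if some color class has all its elements below m, put m there
    have keyEmpty : ∀ c : Bool, ¬ (U c).Nonempty →
        ∃ f : V → Bool, ∀ x ∈ s, ∀ y ∈ s, x ≠ y → f x = f y → r x y ∨ r y x := by
      intro c hUc
      have hbelow : ∀ x ∈ s', f x = c → r x m := by
        intro x hx hfx
        by_contra hrx
        exact hUc ⟨x, hUmem' c x hx hfx hrx⟩
      refine ⟨fun x => if x = m then c else f x, ?_⟩
      intro x hx y hy hxy hfxy
      by_cases hxm : x = m <;> by_cases hym : y = m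
      · exact absurd (hxm.trans hym.symm) hxy
      · subst hxm
        simp only [if_pos rfl, if_neg hym] at hfxy
        exact Or.inr (hbelow y (Finset.mem_erase.mpr ⟨hym, hy⟩) hfxy.symm)
      · subst hym
        simp only [if_pos rfl, if_neg hxm] at hfxy
        exact Or.inl (hbelow x (Finset.mem_erase.mpr ⟨hxm, hx⟩) hfxy)
      · simp only [if_neg hxm, if_neg hym] at hfxy
        exact hf x (Finset.mem_erase.mpr ⟨hxm, hx⟩) y (Finset.mem_erase.mpr ⟨hym, hy⟩) hxy hfxy
    by_cases hUt : (U true).Nonempty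
    swap
    · exact keyEmpty true hUt
    by_cases hUf : (U false).Nonempty
    swap
    · exact keyEmpty false hUf
    -- both nonempty: cross comparability between the two U's
    have cross : ∀ c, ∀ x ∈ U c, ∀ y ∈ U (!c), r x y ∨ r y x := by
      intro c x hx y hy
      obtain ⟨hxs, hfx, hxm⟩ := hUmem _ x hx
      obtain ⟨hys, hfy, hym⟩ := hUmem _ y hy
      have hxy : x ≠ y := by rintro rfl; rw [hfx] at hfy; simp at hfy
      have hxm' : x ≠ m := Finset.ne_of_mem_erase hxs
      have hym' : y ≠ m := Finset.ne_of_mem_erase hys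
      rcases hw x (Finset.mem_of_mem_erase hxs) y (Finset.mem_of_mem_erase hys) m hm
        hxy hxm' hym' with h|h|h|h|h|h
      · exact Or.inl h
      · exact Or.inr h
      · exact absurd h hxm
      · exact absurd h (hnrm x (Finset.mem_of_mem_erase hxs))
      · exact absurd h hym
      · exact absurd h (hnrm y (Finset.mem_of_mem_erase hys))
    obtain ⟨ut, hut, hutmin⟩ := (U true).exists_min_image t hUt
    obtain ⟨uf, huf, hufmin⟩ := (U false).exists_min_image t hUf
    -- the minimum of each U is its least element
    have hleast : ∀ c u, u ∈ U c → (∀ x ∈ U c, t u ≤ t x) → ∀ x ∈ U c, x ≠ u → r u x := by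
      intro c u hu hmin x hx hxu
      obtain ⟨hus, hfu, _⟩ := hUmem _ u hu
      obtain ⟨hxs, hfx, _⟩ := hUmem _ x hx
      rcases hf u hus x hxs (fun h => hxu h.symm) (hfu.trans hfx.symm) with h | h
      · exact h
      · exact absurd (hmin x hx) (not_le.2 (ht _ _ h))
    -- main construction, parameterized by which direction the minima compare
    have key : ∀ c : Bool, ∀ u1 u2, u1 ∈ U c → u2 ∈ U (!c) →
        (∀ x ∈ U (!c), t u2 ≤ t x) → r u1 u2 →
        ∃ f : V → Bool, ∀ x ∈ s, ∀ y ∈ s, x ≠ y → f x = f y → r x y ∨ r y x := by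
      intro c u1 u2 hu1 hu2 hmin2 h12
      -- move U (!c) into color c; put m into color !c
      refine ⟨fun x => if x = m then !c else if f x = !c ∧ ¬ r x m then c else f x, ?_⟩
      intro x hx y hy hxy hfxy
      by_cases hxm : x = m <;> by_cases hym : y = m
      · exact absurd (hxm.trans hym.symm) hxy
      · simp only [if_pos hxm, if_neg hym] at hfxy
        by_cases hcy : f y = !c ∧ ¬ r y m
        · rw [if_pos hcy] at hfxy
          exact absurd hfxy (Bool.not_ne_self c)
        · rw [if_neg hcy] at hfxy
          by_cases hry : r y m
          · exact Or.inr (hxm ▸ hry)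
          · exact absurd ⟨hfxy.symm, hry⟩ hcy
      · simp only [if_pos hym, if_neg hxm] at hfxy
        by_cases hcx : f x = !c ∧ ¬ r x m
        · rw [if_pos hcx] at hfxy
          exact absurd hfxy.symm (Bool.not_ne_self c)
        · rw [if_neg hcx] at hfxy
          by_cases hrx : r x m
          · exact Or.inl (hym ▸ hrx)
          · exact absurd ⟨hfxy, hrx⟩ hcx
      · -- both ≠ m
        have hxs : x ∈ s' := Finset.mem_erase.mpr ⟨hxm, hx⟩
        have hys : y ∈ s' := Finset.mem_erase.mpr ⟨hym, hy⟩
        simp only [if_neg hxm, if_neg hym] at hfxy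
        by_cases hcx : f x = !c ∧ ¬ r x m <;> by_cases hcy : f y = !c ∧ ¬ r y m
        · exact hf x hxs y hys hxy (hcx.1.trans hcy.1.symm)
        · -- x moved from !c to c, y unmoved with color c
          rw [if_pos hcx, if_neg hcy] at hfxy
          have hxU : x ∈ U (!c) := hUmem' _ x hxs hcx.1 hcx.2
          by_cases hry : r y m
          · -- y is below m in color class c: r y u1
            have hyu1 : y ≠ u1 := fun h => (hUmem _ u1 hu1).2.2 (h ▸ hry)
            have hyu1' : r y u1 := by
              rcases hf y hys u1 (hUmem _ u1 hu1).1 hyu1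
                (hfxy.symm.trans (hUmem _ u1 hu1).2.1.symm) with h | h
              · exact h
              · exact absurd (htrans h hry) (hUmem _ u1 hu1).2.2
            have hyu2 : r y u2 := htrans hyu1' h12
            rcases eq_or_ne x u2 with rfl | hxu2
            · exact Or.inr hyu2
            · exact Or.inr (htrans hyu2 (hleast _ u2 hu2 hmin2 x hxU hxu2))
          · -- y incomparable to m: y ∈ U c, use cross comparability
            have hyU : y ∈ U c := hUmem' _ y hys hfxy.symm hry
            exact (cross c y hyU x hxU).symm
        · -- y moved from !c to c, x unmoved with color c
          rw [if_neg hcx, if_pos hcy] at hfxy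
          have hyU : y ∈ U (!c) := hUmem' _ y hys hcy.1 hcy.2
          by_cases hrx : r x m
          · have hxu1 : x ≠ u1 := fun h => (hUmem _ u1 hu1).2.2 (h ▸ hrx)
            have hxu1' : r x u1 := by
              rcases hf x hxs u1 (hUmem _ u1 hu1).1 hxu1
                (hfxy.trans (hUmem _ u1 hu1).2.1.symm) with h | h
              · exact h
              · exact absurd (htrans h hrx) (hUmem _ u1 hu1).2.2
            have hxu2 : r x u2 := htrans hxu1' h12
            rcases eq_or_ne y u2 with rfl | hyu2
            · exact Or.inl hxu2
            · exact Or.inl (htrans hxu2 (hleast _ u2 hu2 hmin2 y hyU hyu2))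
          · have hxU : x ∈ U c := hUmem' _ x hxs hfxy hrx
            exact cross c x hxU y hyU
        · rw [if_neg hcx, if_neg hcy] at hfxy
          exact hf x hxs y hys hxy hfxy
    rcases cross true ut hut uf (by simpa using huf) with h | h
    · exact key true ut uf hut (by simpa using huf) (by simpa using hufmin) h
    · exact key false uf ut huf (by simpa using hut) (by simpa using hutmin) h

/-- A trapezoid representation of a finite simple graph `G`. -/
def IsTrapRep {V : Type*} (G : SimpleGraph V) (a b c d : V → ℝ) : Prop :=
  (∀ i, a i ≤ b i) ∧ (∀ i, c i ≤ d i) ∧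
  Function.Injective (fun p : V × Bool => if p.2 then b p.1 else a p.1) ∧
  Function.Injective (fun p : V × Bool => if p.2 then d p.1 else c p.1) ∧
  ∀ i j : V, i ≠ j →
    (G.Adj i j ↔ ¬((b i < a j ∧ d i < c j) ∨ (b j < a i ∧ d j < c i)))

/-- A trapezoid graph is bipartite if and only if it contains no triangle. -/
theorem trapezoid_bipartite_iff_triangleFree {V : Type*} [Fintype V] (G : SimpleGraph V)
    (hrep : ∃ a b c d : V → ℝ, IsTrapRep G a b c d) :
    G.Colorable 2 ↔ G.CliqueFree 3 := by
  classical
  constructor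
  · exact fun hc => hc.cliqueFree (by norm_num)
  · intro htf
    obtain ⟨a, b, c, d, ha, hc, _, _, hadj⟩ := hrep
    set r : V → V → Prop := fun i j => b i < a j ∧ d i < c j with hr
    have htrans : ∀ {x y z}, r x y → r y z → r x z := by
      intro x y z h1 h2
      exact ⟨h1.1.trans_le ((ha y).trans h2.1.le), h1.2.trans_le ((hc y).trans h2.2.le)⟩
    have ht : ∀ x y, r x y → b x < b y := fun x y h => h.1.trans_le (ha y)
    have hcomp : ∀ x y : V, x ≠ y → ¬ G.Adj x y → r x y ∨ r y x := by
      intro x y hxy hnadj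
      by_contra hcon
      push_neg at hcon
      exact hnadj ((hadj x y hxy).mpr (by tauto))
    have hw : ∀ x ∈ (Finset.univ : Finset V), ∀ y ∈ (Finset.univ : Finset V),
        ∀ z ∈ (Finset.univ : Finset V), x ≠ y → x ≠ z → y ≠ z →
        r x y ∨ r y x ∨ r x z ∨ r z x ∨ r y z ∨ r z y := by
      intro x _ y _ z _ hxy hxz hyz
      by_contra hcon
      push_neg at hcon
      obtain ⟨h1, h2, h3, h4, h5, h6⟩ := hcon
      have axy : G.Adj x y := by
        by_contra h; rcases hcomp x y hxy h with h'|h' <;> [exact h1 h'; exact h2 h']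
      have axz : G.Adj x z := by
        by_contra h; rcases hcomp x z hxz h with h'|h' <;> [exact h3 h'; exact h4 h']
      have ayz : G.Adj y z := by
        by_contra h; rcases hcomp y z hyz h with h'|h' <;> [exact h5 h'; exact h6 h']
      refine htf {x, y, z} ⟨?_, ?_⟩
      · intro u hu v hv huv
        simp only [Finset.coe_insert, Set.mem_insert_iff, Finset.coe_singleton,
          Set.mem_singleton_iff] at hu hv
        rcases hu with rfl|rfl|rfl <;> rcases hv with rfl|rfl|rfl <;>
          first
            | exact absurd rfl huv
            | assumption
            | exact axy.symm
            | exact axz.symm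
            | exact ayz.symm
      · rw [Finset.card_insert_of_notMem (by simp [hxy, hxz]),
          Finset.card_insert_of_notMem (by simp [hyz]), Finset.card_singleton]
    obtain ⟨f, hf⟩ := width2_chain_decomp r b htrans ht Finset.univ hw
    refine ⟨⟨fun v => if f v then 0 else 1, ?_⟩⟩
    intro v w hvw heq
    have hne : v ≠ w := hvw.ne
    have hfvw : f v = f w := by
      by_cases h1 : f v <;> by_cases h2 : f w <;> simp [h1, h2] at heq ⊢
    have := hf v (Finset.mem_univ v) w (Finset.mem_univ w) hne hfvw
    exact ((hadj v w hne).mp hvw) (by tauto)
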